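/- arXiv:2203.14483 — 3 statements merged into one kernel-verified Lean document; each statement's English description precedes it below -/
import Mathlib

section
/- Let (W,S) be a Coxeter system, J ⊆ S, x ∈ W^J, and s ∈ S with sx ∈ W^J and sx > x. Define, for z ∈ W^J, the sets X⁺_{≤z}, X⁻_{≤z}, X⁰_{≤z} of y ∈ W^J with y ≤ z and respectively sy ∈ W^J & sy > y, sy ∈ W^J & sy < y, sy ∉ W^J. Then s·(X⁺_{≤x}) = X⁻_{≤sx}, X⁺_{≤x} = X⁺_{≤sx}, and X⁰_{≤x} = X⁰_{≤sx}. -/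
open CoxeterSystem

variable {B W : Type*} [Group W] {M : CoxeterMatrix B}

/-- The Bruhat covering-type step: `v = u * t` for a reflection `t`, with `ℓ(u) < ℓ(v)`. -/
def bruhatStep (cs : CoxeterSystem M W) (u v : W) : Prop :=
  ∃ t : W, cs.IsReflection t ∧ v = u * t ∧ cs.length u < cs.length v

/-- The Bruhat order `u ≤ v` on a Coxeter group. -/
def bruhatLE (cs : CoxeterSystem M W) : W → W → Prop :=
  Relation.ReflTransGen (bruhatStep cs)

/-- The strict Bruhat order `u < v`. -/
def bruhatLT (cs : CoxeterSystem M W) (u v : W) : Prop :=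
  bruhatLE cs u v ∧ u ≠ v

/-- The set `W^J` of minimal length coset representatives of `W/W_J`:
`W^J = {w | w s > w for all s ∈ J}`. -/
def minCosetReps (cs : CoxeterSystem M W) (J : Set B) : Set W :=
  {w | ∀ i ∈ J, bruhatLT cs w (w * cs.simple i)}

open List
open scoped Classical

namespace BrAux

variable (cs : CoxeterSystem M W)

local prefix:100 "ss" => cs.simple
local prefix:100 "π" => cs.wordProd
local prefix:100 "ℓ" => cs.length

/-- The basic involution on `W × ℤˣ`. -/
noncomputable def eta (i : B) : Equiv.Perm (W × ℤˣ) :=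
  Function.Involutive.toPerm
    (fun p => (ss i * p.1 * ss i, if p.1 = ss i then -p.2 else p.2))
    (by
      rintro ⟨t, ε⟩
      have hc : ss i * (ss i * t * ss i) * ss i = t := by
        simp only [mul_assoc, cs.simple_mul_simple_self, mul_one,
          cs.simple_mul_simple_cancel_left]
      have hcond : (ss i * t * ss i = ss i) ↔ t = ss i := by
        constructor
        · intro h
          have := congrArg (fun x => ss i * x * ss i) h
          simpa only [hc, cs.simple_mul_simple_self, one_mul, mul_one,
            cs.simple_mul_simple_cancel_left, mul_assoc] using this
        · rintro rfl
          rw [cs.simple_mul_simple_self, one_mul]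
      simp only
      rw [hc]
      by_cases h : t = ss i
      · rw [if_pos h, if_pos (hcond.mpr h), neg_neg]
      · rw [if_neg h, if_neg (fun hh => h (hcond.mp hh))])

theorem eta_apply (i : B) (t : W) (ε : ℤˣ) :
    eta cs i (t, ε) = (ss i * t * ss i, if t = ss i then -ε else ε) := rfl

theorem eta_liftable : M.IsLiftable (fun i => eta cs i) := by
  intro i j
  have hb : (ss i * ss j)⁻¹ = ss j * ss i := by
    rw [mul_inv_rev, cs.inv_simple, cs.inv_simple]
  have hmain : ∀ l : ℕ, (ss j * ss i) * ((ss j * ss i) ^ l * ss j) * (ss i * ss j)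
      = (ss j * ss i) ^ (l + 2) * ss j := by
    intro l
    have h1 : (ss j * ss i) ^ (l + 2)
        = (ss j * ss i) * ((ss j * ss i) ^ l * (ss j * ss i)) := by
      have h2 : l + 2 = 1 + l + 1 := by omega
      rw [h2, pow_succ, pow_add, pow_one, mul_assoc]
    rw [h1]
    simp only [mul_assoc]
  have hcondshift : ∀ l : ℕ, ∀ t : W,
      ((ss j * ss i) ^ l * ss j = (ss i * ss j) * t * (ss i * ss j)⁻¹)
        ↔ ((ss j * ss i) ^ (l + 2) * ss j = t) := by
    intro l t
    rw [← hmain l, hb]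
    constructor
    · intro h
      rw [h]
      simp only [mul_assoc, cs.simple_mul_simple_cancel_left,
        cs.simple_mul_simple_self, mul_one]
    · intro h
      rw [← h]
      simp only [mul_assoc, cs.simple_mul_simple_cancel_left,
        cs.simple_mul_simple_self, mul_one]
  have key : ∀ n : ℕ, ∀ t : W, ∀ ε : ℤˣ,
      ((eta cs i * eta cs j) ^ n) (t, ε) =
        ((ss i * ss j) ^ n * t * ((ss i * ss j) ^ n)⁻¹,
          (∏ l ∈ Finset.range (2 * n),
            (if (ss j * ss i) ^ l * ss j = t then (-1 : ℤˣ) else 1)) * ε) := by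
    intro n
    induction n with
    | zero => intro t ε; simp
    | succ n ih =>
      intro t ε
      have hstep : ((eta cs i * eta cs j) ^ (n+1)) (t, ε)
          = ((eta cs i * eta cs j) ^ n) ((eta cs i * eta cs j) (t, ε)) := by
        rw [pow_succ]
        rfl
      have h1 : (ss j * t * ss j = ss i) ↔ ((ss j * ss i) ^ 1 * ss j = t) := by
        rw [pow_one]
        constructor
        · intro h
          rw [mul_assoc, ← h]
          simp only [mul_assoc, cs.simple_mul_simple_cancel_left,
            cs.simple_mul_simple_self, mul_one]
        · intro h
          rw [← h]
          simp only [mul_assoc, cs.simple_mul_simple_cancel_left,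
            cs.simple_mul_simple_self, mul_one]
      have h0 : (t = ss j) ↔ ((ss j * ss i) ^ 0 * ss j = t) := by
        rw [pow_zero, one_mul, eq_comm]
      have hg : (eta cs i * eta cs j) (t, ε)
          = ((ss i * ss j) * t * ((ss i * ss j))⁻¹,
            (if (ss j * ss i) ^ 1 * ss j = t then (-1:ℤˣ) else 1) *
              ((if (ss j * ss i) ^ 0 * ss j = t then (-1:ℤˣ) else 1) * ε)) := by
        show eta cs i (eta cs j (t, ε)) = _
        rw [eta_apply, eta_apply]
        rw [hb]
        have hfst : ss i * (ss j * t * ss j) * ss i = ss i * ss j * t * (ss j * ss i) := by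
          simp only [mul_assoc]
        rw [Prod.mk.injEq]
        constructor
        · exact hfst
        · by_cases hx : ss j * t * ss j = ss i <;> by_cases hy : t = ss j
          · rw [if_pos hx, if_pos hy, if_pos (h1.mp hx), if_pos (h0.mp hy), neg_neg]
            simp
          · rw [if_pos hx, if_neg hy, if_pos (h1.mp hx),
              if_neg (fun hh => hy (h0.mpr hh)), one_mul]
            try simp
          · rw [if_neg hx, if_pos hy, if_neg (fun hh => hx (h1.mpr hh)),
              if_pos (h0.mp hy), one_mul]
            try simp
          · rw [if_neg hx, if_neg hy, if_neg (fun hh => hx (h1.mpr hh)),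
              if_neg (fun hh => hy (h0.mpr hh)), one_mul, one_mul]
            try simp
      rw [hstep, hg, ih]
      rw [Prod.mk.injEq]
      constructor
      · simp only [pow_succ, mul_inv_rev, mul_assoc]
      · have hshift : (∏ l ∈ Finset.range (2 * n),
            (if (ss j * ss i) ^ l * ss j = (ss i * ss j) * t * (ss i * ss j)⁻¹
              then (-1 : ℤˣ) else 1))
            = ∏ l ∈ Finset.range (2 * n),
              (if (ss j * ss i) ^ (l + 2) * ss j = t then (-1 : ℤˣ) else 1) := by
          apply Finset.prod_congr rfl
          intro l _
          rw [if_congr (hcondshift l t) rfl rfl]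
        rw [hshift]
        have h2n : 2 * (n + 1) = (2 * n + 1) + 1 := by omega
        rw [h2n, Finset.prod_range_succ', Finset.prod_range_succ']
        have hre : ∀ l : ℕ, l + 1 + 1 = l + 2 := fun l => by omega
        simp only [hre, zero_add]
        simp only [mul_assoc]
  have hrel := key (M i j)
  apply Equiv.ext
  rintro ⟨t, ε⟩
  rw [hrel t ε]
  have hpow : (ss i * ss j) ^ M.M i j = 1 := cs.simple_mul_simple_pow i j
  have hpow' : (ss j * ss i) ^ M.M i j = 1 := cs.simple_mul_simple_pow' i j
  have hprod : (∏ l ∈ Finset.range (2 * M.M i j),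
      (if (ss j * ss i) ^ l * ss j = t then (-1 : ℤˣ) else 1)) = 1 := by
    rw [two_mul, Finset.prod_range_add]
    have heq : ∀ l : ℕ, (if (ss j * ss i) ^ (M.M i j + l) * ss j = t then (-1 : ℤˣ) else 1)
        = (if (ss j * ss i) ^ l * ss j = t then (-1 : ℤˣ) else 1) := by
      intro l
      have hiff : ((ss j * ss i) ^ (M.M i j + l) * ss j = t) ↔ ((ss j * ss i) ^ l * ss j = t) := by
        rw [pow_add, hpow', one_mul]
      rw [if_congr hiff rfl rfl]
    simp only [heq]
    exact Int.units_mul_self _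
  rw [hpow, hprod]
  simp

/-- The permutation representation of the Coxeter group on `W × ℤˣ`. -/
noncomputable def rho : W →* Equiv.Perm (W × ℤˣ) :=
  cs.lift ⟨fun i => eta cs i, eta_liftable cs⟩

theorem rho_simple (i : B) : rho cs (ss i) = eta cs i :=
  cs.lift_apply_simple (eta_liftable cs) i

theorem rho_wordProd (ω : List B) (t : W) (ε : ℤˣ) :
    rho cs (π ω) (t, ε) =
      (π ω * t * (π ω)⁻¹, ((-1 : ℤˣ) ^ (List.count t (cs.rightInvSeq ω))) * ε) := by
  induction ω generalizing t ε with
  | nil => simp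
  | cons i ω ih =>
    rw [cs.wordProd_cons, map_mul]
    have : (rho cs (ss i) * rho cs (π ω)) (t, ε) = rho cs (ss i) (rho cs (π ω) (t, ε)) := rfl
    rw [this, ih, rho_simple, eta_apply]
    have hris : cs.rightInvSeq (i :: ω) = ((π ω)⁻¹ * ss i * π ω) :: cs.rightInvSeq ω := rfl
    have hcond : (π ω * t * (π ω)⁻¹ = ss i) ↔ ((π ω)⁻¹ * ss i * π ω = t) := by
      constructor
      · intro h
        rw [← h]
        group
      · intro h
        rw [← h]
        group
    rw [Prod.mk.injEq]
    constructor
    · simp only [mul_inv_rev, mul_assoc, cs.inv_simple]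
    · rw [hris, List.count_cons]
      simp only [beq_iff_eq]
      by_cases h : (π ω)⁻¹ * ss i * π ω = t
      · rw [if_pos (hcond.mpr h), if_pos h, pow_add, pow_one]
        have hc : ∀ u : ℤˣ, -((-1:ℤˣ)^(List.count t (cs.rightInvSeq ω)) * u)
            = (-1:ℤˣ)^(List.count t (cs.rightInvSeq ω)) * -1 * u := by
          intro u
          simp [mul_comm, mul_assoc]
        exact hc ε
      · rw [if_neg (fun hh => h (hcond.mp hh)), if_neg h, add_zero]

/-- The sign of `t` at `w`. -/
noncomputable def sgn (w t : W) : ℤˣ := (rho cs w (t, 1)).2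

theorem sgn_eq_count {ω : List B} {w : W} (hω : π ω = w) (t : W) :
    sgn cs w t = (-1 : ℤˣ) ^ (List.count t (cs.rightInvSeq ω)) := by
  rw [sgn, ← hω, rho_wordProd, mul_one]

theorem rho_apply (w t : W) (ε : ℤˣ) :
    rho cs w (t, ε) = (w * t * w⁻¹, sgn cs w t * ε) := by
  obtain ⟨ω, hω⟩ := cs.wordProd_surjective w
  subst hω
  rw [rho_wordProd, sgn_eq_count cs rfl]

theorem sgn_self_refl {t : W} (ht : cs.IsReflection t) : sgn cs t t = -1 := by
  obtain ⟨v, k, rfl⟩ := ht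
  set t := v * ss k * v⁻¹ with hdef
  have hvt : v⁻¹ * t * (v⁻¹)⁻¹ = ss k := by
    rw [hdef]
    group
  have h1 : rho cs v⁻¹ (t, 1) = (ss k, sgn cs v⁻¹ t) := by
    rw [rho_apply, hvt, mul_one]
  have hid : rho cs v (rho cs v⁻¹ (t, 1)) = (t, 1) := by
    have : rho cs v (rho cs v⁻¹ (t, 1)) = (rho cs v * rho cs v⁻¹) (t, 1) := rfl
    rw [this, ← map_mul, mul_inv_cancel, map_one]
    try rfl
  have h2 : rho cs v (ss k, sgn cs v⁻¹ t) = (t, sgn cs v (ss k) * sgn cs v⁻¹ t) := by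
    rw [rho_apply]
  have hsigma : sgn cs v (ss k) * sgn cs v⁻¹ t = 1 := by
    have := hid
    rw [h1, h2] at this
    exact (Prod.mk.injEq _ _ _ _ ▸ this).2
  -- now compute rho t (t, 1)
  have hsplit : rho cs t (t, 1) = rho cs v (rho cs (ss k) (rho cs v⁻¹ (t, 1))) := by
    have ht2 : t = v * (ss k * v⁻¹) := by rw [hdef, mul_assoc]
    have hhom : rho cs t = rho cs v * (rho cs (ss k) * rho cs v⁻¹) := by
      rw [← map_mul, ← map_mul, ← ht2]
    rw [hhom]
    rfl
  have hetak : rho cs (ss k) (ss k, sgn cs v⁻¹ t) = (ss k, -sgn cs v⁻¹ t) := by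
    rw [rho_simple, eta_apply, if_pos rfl]
    congr 1
    rw [mul_assoc, cs.simple_mul_simple_self, mul_one]
  have : rho cs t (t, 1) = (t, sgn cs v (ss k) * -sgn cs v⁻¹ t) := by
    rw [hsplit, h1, hetak, rho_apply]
  rw [sgn, this]
  have : sgn cs v (ss k) * -sgn cs v⁻¹ t = -(sgn cs v (ss k) * sgn cs v⁻¹ t) := by
    simp
  rw [this, hsigma]

theorem sgn_mul_refl (w : W) {t : W} (ht : cs.IsReflection t) :
    sgn cs (w * t) t = -sgn cs w t := by
  have htt : t * t * t⁻¹ = t := by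
    rw [ht.mul_self, one_mul, ht.inv]
  have : rho cs (w * t) (t, 1) = rho cs w (rho cs t (t, 1)) := by
    rw [map_mul]
    rfl
  rw [sgn, this]
  have h1 : rho cs t (t, 1) = (t, -1) := by
    rw [rho_apply, htt, sgn_self_refl cs ht, mul_one]
  rw [h1, rho_apply]
  simp

theorem sgn_neg_one_iff {t : W} (ht : cs.IsReflection t) (w : W) :
    sgn cs w t = -1 ↔ ℓ (w * t) < ℓ w := by
  have H : ∀ n : ℕ, ∀ w : W, ℓ w = n → (sgn cs w t = -1 ↔ ℓ (w * t) < ℓ w) := by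
    intro n
    induction n using Nat.strong_induction_on with
    | _ n ih =>
      intro w hn
      rcases eq_or_ne w 1 with rfl | hne
      · have h1 : sgn cs 1 t = 1 := by
          rw [sgn, map_one]
          rfl
        rw [h1]
        simp only [one_mul, cs.length_one]
        constructor
        · intro h; exact absurd h (by decide)
        · intro h; omega
      · obtain ⟨k, hk⟩ := cs.exists_leftDescent_of_ne_one hne
        have hu : ℓ (ss k * w) < ℓ w := hk
        set u := ss k * w with hudef
        have hw : w = ss k * u := by
          rw [hudef, cs.simple_mul_simple_cancel_left]
        have hsgn : sgn cs w t
            = if u * t * u⁻¹ = ss k then -sgn cs u t else sgn cs u t := by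
          have hh : rho cs w (t, 1) = rho cs (ss k) (rho cs u (t, 1)) := by
            rw [hw, map_mul]
            rfl
          rw [sgn, hh, rho_apply cs u t 1, rho_simple, eta_apply]
          by_cases h : u * t * u⁻¹ = ss k
          · rw [if_pos h, if_pos h, mul_one]
            try rfl
          · rw [if_neg h, if_neg h, mul_one]
            try rfl
        by_cases h : u * t * u⁻¹ = ss k
        · have hut : u * t = ss k * u := by
            have := congrArg (fun x => x * u) h
            simpa only [mul_assoc, inv_mul_cancel, mul_one] using this
          have hwt : w * t = u := by
            rw [hw, mul_assoc, hut, cs.simple_mul_simple_cancel_left]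
          have hut2 : ℓ (u * t) = ℓ w := by rw [hut, ← hw]
          have hihu := ih (ℓ u) (by omega) u rfl
          have hsgnu : sgn cs u t = 1 := by
            rcases Int.units_eq_one_or (sgn cs u t) with h' | h'
            · exact h'
            · exfalso
              have := hihu.mp h'
              omega
          rw [hsgn, if_pos h, hsgnu, hwt]
          exact iff_of_true rfl hu
        · rw [hsgn, if_neg h]
          have hne3 : ℓ (u * t) ≠ ℓ u := ht.length_mul_left_ne u
          have hihu := ih (ℓ u) (by omega) u rfl
          rcases lt_or_gt_of_ne hne3 with hlt | hgt
          · have hsgnu : sgn cs u t = -1 := hihu.mpr hlt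
            have hwt : ℓ (w * t) < ℓ w := by
              have heq : w * t = ss k * (u * t) := by rw [hw, mul_assoc]
              have := cs.length_simple_mul (u * t) k
              rw [heq]
              omega
            exact iff_of_true hsgnu hwt
          · have hsgnu : sgn cs u t = 1 := by
              rcases Int.units_eq_one_or (sgn cs u t) with h' | h'
              · exact h'
              · exfalso
                have := hihu.mp h'
                omega
            have hnlt : ¬ (ℓ (w * t) < ℓ w) := by
              intro hlt2
              have hs2 : sgn cs (w * t) t = -1 := by
                rw [sgn_mul_refl cs w ht, hsgn, if_neg h, hsgnu]
              have hih2 := ih (ℓ (w * t)) (by omega) (w * t) rfl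
              have := hih2.mp hs2
              rw [mul_assoc, ht.mul_self, mul_one] at this
              omega
            rw [hsgnu]
            exact iff_of_false (by decide) hnlt
  exact H (ℓ w) w rfl

theorem strong_exchange {t w : W} (ht : cs.IsReflection t) (hlen : ℓ (w * t) < ℓ w)
    {ω : List B} (hω : π ω = w) : t ∈ cs.rightInvSeq ω := by
  have h1 := (sgn_neg_one_iff cs ht w).mpr hlen
  rw [sgn_eq_count cs hω] at h1
  by_contra hmem
  rw [List.count_eq_zero.mpr hmem, pow_zero] at h1
  exact absurd h1 (by decide)

theorem strong_exchange' {t w : W} (ht : cs.IsReflection t) (hlen : ℓ (w * t) < ℓ w)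
    {ω : List B} (hω : π ω = w) :
    ∃ j < ω.length, (cs.rightInvSeq ω).getD j 1 = t ∧ π (ω.eraseIdx j) = w * t := by
  obtain ⟨j, hj, hget⟩ := List.getElem_of_mem (strong_exchange cs ht hlen hω)
  rw [cs.length_rightInvSeq] at hj
  have hgd : (cs.rightInvSeq ω).getD j 1 = t := by
    rw [List.getD_eq_getElem _ 1 (by rw [cs.length_rightInvSeq]; exact hj), hget]
  refine ⟨j, hj, hgd, ?_⟩
  rw [← cs.wordProd_mul_getD_rightInvSeq, hgd, hω]

section Bruhat

theorem le_length {u v : W} (h : bruhatLE cs u v) : ℓ u ≤ ℓ v := by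
  induction h with
  | refl => exact le_refl _
  | tail _ hstep ih =>
    obtain ⟨t, _, _, hlen⟩ := hstep
    omega

theorem lt_length {u v : W} (h : bruhatLT cs u v) : ℓ u < ℓ v := by
  obtain ⟨hle, hne⟩ := h
  rcases Relation.ReflTransGen.cases_tail hle with h1 | ⟨c, hc, hstep⟩
  · exact absurd h1.symm hne
  · obtain ⟨t, _, _, hlen⟩ := hstep
    have := le_length cs hc
    omega

theorem le_of_step {u t : W} (ht : cs.IsReflection t) (hlen : ℓ u < ℓ (u * t)) :
    bruhatLE cs u (u * t) :=
  Relation.ReflTransGen.single ⟨t, ht, rfl, hlen⟩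

theorem lt_iff {u v : W} : bruhatLT cs u v ↔ bruhatLE cs u v ∧ ℓ u < ℓ v := by
  constructor
  · intro h
    exact ⟨h.1, lt_length cs h⟩
  · rintro ⟨hle, hlen⟩
    exact ⟨hle, fun he => by rw [he] at hlen; omega⟩

theorem simple_conj_reflection (u : W) (k : B) : cs.IsReflection (u⁻¹ * ss k * u) := by
  have := (cs.isReflection_simple k).conj u⁻¹
  rwa [inv_inv] at this

theorem simple_mul_eq (u : W) (k : B) : ss k * u = u * (u⁻¹ * ss k * u) := by
  group

theorem le_simple_mul {u : W} {k : B} (hlen : ℓ u < ℓ (ss k * u)) :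
    bruhatLE cs u (ss k * u) := by
  rw [simple_mul_eq cs u k] at hlen ⊢
  exact le_of_step cs (simple_conj_reflection cs u k) hlen

theorem le_inv {u v : W} (h : bruhatLE cs u v) : bruhatLE cs u⁻¹ v⁻¹ := by
  induction h with
  | refl => exact Relation.ReflTransGen.refl
  | @tail b c hab hstep ih =>
    obtain ⟨t, ht, hc, hlen⟩ := hstep
    refine ih.tail ⟨b * t * b⁻¹, ht.conj b, ?_, ?_⟩
    · rw [hc, mul_inv_rev, ht.inv]
      group
    · rw [cs.length_inv, cs.length_inv]
      exact hlen

theorem le_iff_inv {u v : W} : bruhatLE cs u v ↔ bruhatLE cs u⁻¹ v⁻¹ := by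
  constructor
  · exact le_inv cs
  · intro h
    have := le_inv cs h
    rwa [inv_inv, inv_inv] at this

theorem core {k : B} {d c : W} (hds : ℓ (d * ss k) < ℓ d) {t : W} (ht : cs.IsReflection t)
    (hc : c = d * t) (hlen : ℓ c < ℓ d) :
    c = d * ss k ∨ ∃ e : W, bruhatLE cs e (d * ss k) ∧ c = e * ss k ∧ ℓ e < ℓ (d * ss k) := by
  obtain ⟨δ', hred, hw⟩ := cs.exists_reduced_word' (d * ss k)
  have hdich := cs.length_mul_simple d k
  have hℓ : ℓ (d * ss k) + 1 = ℓ d := by omega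
  have hπδ : π (δ' ++ [k]) = d := by
    rw [wordProd_append, wordProd_singleton, ← hw, cs.simple_mul_simple_cancel_right]
  have hdt : ℓ (d * t) < ℓ d := hc ▸ hlen
  obtain ⟨j, hj, hgd, herase⟩ := strong_exchange' cs ht hdt hπδ
  have hlenδ' : δ'.length = ℓ (d * ss k) := by
    rw [hw]
    exact (hred).symm
  have hj2 : j < δ'.length + 1 := by
    rw [List.length_append, List.length_singleton] at hj
    exact hj
  rcases Nat.lt_or_ge j δ'.length with hjlt | hjge
  · right
    have herase2 : (δ' ++ [k]).eraseIdx j = δ'.eraseIdx j ++ [k] :=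
      List.eraseIdx_append_of_lt_length hjlt _
    set e := π (δ'.eraseIdx j) with he
    have hce : c = e * ss k := by
      rw [hc, ← herase, herase2, wordProd_append, wordProd_singleton]
    have hle : ℓ e < ℓ (d * ss k) := by
      have h1 : ℓ e ≤ (δ'.eraseIdx j).length := cs.length_wordProd_le _
      have h2 : (δ'.eraseIdx j).length + 1 = δ'.length :=
        List.length_eraseIdx_add_one hjlt
      omega
    refine ⟨e, ?_, hce, hle⟩
    have hx : π δ' * (cs.rightInvSeq δ').getD j 1 = e := cs.wordProd_mul_getD_rightInvSeq δ' j
    have hxm : (cs.rightInvSeq δ').getD j 1 ∈ cs.rightInvSeq δ' := by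
      rw [List.getD_eq_getElem _ 1 (by rw [cs.length_rightInvSeq]; exact hjlt)]
      exact List.getElem_mem _
    have hxr : cs.IsReflection ((cs.rightInvSeq δ').getD j 1) :=
      cs.isReflection_of_mem_rightInvSeq δ' hxm
    have hds2 : d * ss k = e * (cs.rightInvSeq δ').getD j 1 := by
      rw [← hx, hw]
      rw [mul_assoc, hxr.mul_self, mul_one]
    refine Relation.ReflTransGen.single ⟨_, hxr, hds2, ?_⟩
    omega
  · left
    have hjeq : j = δ'.length := by omega
    have herase2 : (δ' ++ [k]).eraseIdx j = δ' := by
      rw [hjeq, List.eraseIdx_append_of_length_le (le_refl _), Nat.sub_self]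
      simp
    rw [hc, ← herase, herase2, ← hw]

theorem stepR (k : B) {c d : W} (hstep : bruhatStep cs c d) :
    bruhatLE cs (c * ss k) (d * ss k) ∨ bruhatLE cs (c * ss k) d := by
  obtain ⟨t, ht, hd, hlen⟩ := hstep
  subst hd
  have hnec := cs.length_mul_simple_ne c k
  rcases Nat.lt_or_ge (ℓ (c * ss k)) (ℓ c) with hcs | hcs
  · right
    have hstep1 : bruhatStep cs (c * ss k) c :=
      ⟨ss k, cs.isReflection_simple k, by rw [cs.simple_mul_simple_cancel_right], hcs⟩
    exact (Relation.ReflTransGen.single hstep1).tail ⟨t, ht, rfl, hlen⟩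
  · have hcs2 : ℓ c < ℓ (c * ss k) := by omega
    have hcsl : ℓ (c * ss k) = ℓ c + 1 := by
      have := cs.length_mul_simple c k
      omega
    have hned := cs.length_mul_simple_ne (c * t) k
    rcases Nat.lt_or_ge (ℓ (c * t * ss k)) (ℓ (c * t)) with hds | hds
    · have hc2 : c = (c * t) * t := by
        rw [mul_assoc, ht.mul_self, mul_one]
      rcases core cs hds ht hc2 hlen with h1 | ⟨e, he, hce, hle⟩
      · right
        have hck : c * ss k = c * t := by
          conv_lhs => rw [h1]
          rw [cs.simple_mul_simple_cancel_right]
        rw [hck]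
        exact Relation.ReflTransGen.refl
      · left
        have hck : c * ss k = e := by
          conv_lhs => rw [hce]
          rw [cs.simple_mul_simple_cancel_right]
        rw [hck]
        exact he
    · left
      have hds2 : ℓ (c * t) < ℓ (c * t * ss k) := by omega
      have hrefl : cs.IsReflection (ss k * t * ss k) := by
        have := ht.conj (ss k)
        rwa [cs.inv_simple] at this
      refine Relation.ReflTransGen.single ⟨ss k * t * ss k, hrefl, ?_, ?_⟩
      · simp only [mul_assoc, cs.simple_mul_simple_cancel_left]
      · omega

theorem chainR (k : B) {c d : W} (h : bruhatLE cs c d) :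
    bruhatLE cs (c * ss k) (d * ss k) ∨ bruhatLE cs (c * ss k) d := by
  induction h with
  | refl => exact Or.inl Relation.ReflTransGen.refl
  | @tail b c' hab hstep ih =>
    rcases ih with h1 | h1
    · rcases stepR cs k hstep with h2 | h2
      · exact Or.inl (h1.trans h2)
      · exact Or.inr (h1.trans h2)
    · exact Or.inr (h1.tail hstep)

theorem claimZ (k : B) {d c : W} (hds : ℓ (d * ss k) < ℓ d) (hcd : bruhatLE cs c d)
    (hcs : ℓ c < ℓ (c * ss k)) : bruhatLE cs c (d * ss k) := by
  have H : ∀ n : ℕ, ∀ d : W, ℓ d = n → ℓ (d * ss k) < ℓ d →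
      ∀ c : W, bruhatLE cs c d → ℓ c < ℓ (c * ss k) → bruhatLE cs c (d * ss k) := by
    intro n
    induction n using Nat.strong_induction_on with
    | _ n ih =>
      intro d hn hds c hcd hcs
      rcases Relation.ReflTransGen.cases_tail hcd with h1 | ⟨d₁, hcd₁, hstep⟩
      · subst h1
        omega
      · obtain ⟨t, ht, hd, hlen⟩ := hstep
        have hc2 : d₁ = d * t := by
          rw [hd, mul_assoc, ht.mul_self, mul_one]
        rcases core cs hds ht hc2 hlen with h2 | ⟨e, he, hd1e, hle⟩
        · rwa [h2] at hcd₁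
        · have hde : d₁ * ss k = e := by
            rw [hd1e, cs.simple_mul_simple_cancel_right]
          rcases Nat.lt_or_ge (ℓ e) (ℓ d₁) with hlt | hge
          · have hds₁ : ℓ (d₁ * ss k) < ℓ d₁ := by rwa [hde]
            have := ih (ℓ d₁) (by omega) d₁ rfl hds₁ c hcd₁ hcs
            rw [hde] at this
            exact this.trans he
          · have hne : ℓ (d₁ * ss k) ≠ ℓ d₁ := cs.length_mul_simple_ne d₁ k
            rw [hde] at hne
            have hgt : ℓ d₁ < ℓ e := by omega
            have hstep2 : bruhatLE cs d₁ e :=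
              Relation.ReflTransGen.single ⟨ss k, cs.isReflection_simple k,
                by rw [hd1e, cs.simple_mul_simple_cancel_right], hgt⟩
            exact (hcd₁.trans hstep2).trans he
  exact H (ℓ d) d rfl hds c hcd hcs

theorem claimZ' (k : B) {d c : W} (hds : ℓ (d * ss k) < ℓ d) (hcd : bruhatLE cs c d)
    (hcs : ℓ (c * ss k) < ℓ c) : bruhatLE cs (c * ss k) (d * ss k) := by
  have h1 : bruhatLE cs (c * ss k) c :=
    Relation.ReflTransGen.single ⟨ss k, cs.isReflection_simple k,
      by rw [cs.simple_mul_simple_cancel_right], hcs⟩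
  have h2 : ℓ (c * ss k) < ℓ (c * ss k * ss k) := by
    rwa [cs.simple_mul_simple_cancel_right]
  exact claimZ cs k hds (h1.trans hcd) h2

theorem monoR (k : B) {c d : W} (hcd : bruhatLE cs c d) (hcs : ℓ c < ℓ (c * ss k))
    (hds : ℓ d < ℓ (d * ss k)) : bruhatLE cs (c * ss k) (d * ss k) := by
  rcases chainR cs k hcd with h1 | h1
  · exact h1
  · exact h1.tail ⟨ss k, cs.isReflection_simple k, rfl, hds⟩

-- Left versions
theorem claimZL (k : B) {d c : W} (hds : ℓ (ss k * d) < ℓ d) (hcd : bruhatLE cs c d)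
    (hcs : ℓ c < ℓ (ss k * c)) : bruhatLE cs c (ss k * d) := by
  have h1 : bruhatLE cs c⁻¹ (d⁻¹ * ss k) := by
    apply claimZ cs k
    · rw [show d⁻¹ * ss k = (ss k * d)⁻¹ by rw [mul_inv_rev, cs.inv_simple],
        cs.length_inv, cs.length_inv]
      exact hds
    · exact le_inv cs hcd
    · rw [show c⁻¹ * ss k = (ss k * c)⁻¹ by rw [mul_inv_rev, cs.inv_simple],
        cs.length_inv, cs.length_inv]
      exact hcs
  have := le_inv cs h1
  rwa [inv_inv, show (d⁻¹ * ss k)⁻¹ = ss k * d by rw [mul_inv_rev, cs.inv_simple, inv_inv]]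
    at this

theorem claimZL' (k : B) {d c : W} (hds : ℓ (ss k * d) < ℓ d) (hcd : bruhatLE cs c d)
    (hcs : ℓ (ss k * c) < ℓ c) : bruhatLE cs (ss k * c) (ss k * d) := by
  have h1 : bruhatLE cs (c⁻¹ * ss k) (d⁻¹ * ss k) := by
    apply claimZ' cs k
    · rw [show d⁻¹ * ss k = (ss k * d)⁻¹ by rw [mul_inv_rev, cs.inv_simple],
        cs.length_inv, cs.length_inv]
      exact hds
    · exact le_inv cs hcd
    · rw [show c⁻¹ * ss k = (ss k * c)⁻¹ by rw [mul_inv_rev, cs.inv_simple],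
        cs.length_inv, cs.length_inv]
      exact hcs
  have := le_inv cs h1
  rwa [show (c⁻¹ * ss k)⁻¹ = ss k * c by rw [mul_inv_rev, cs.inv_simple, inv_inv],
    show (d⁻¹ * ss k)⁻¹ = ss k * d by rw [mul_inv_rev, cs.inv_simple, inv_inv]] at this

theorem monoL (k : B) {c d : W} (hcd : bruhatLE cs c d) (hcs : ℓ c < ℓ (ss k * c))
    (hds : ℓ d < ℓ (ss k * d)) : bruhatLE cs (ss k * c) (ss k * d) := by
  have h1 : bruhatLE cs (c⁻¹ * ss k) (d⁻¹ * ss k) := by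
    apply monoR cs k (le_inv cs hcd)
    · rw [show c⁻¹ * ss k = (ss k * c)⁻¹ by rw [mul_inv_rev, cs.inv_simple],
        cs.length_inv, cs.length_inv]
      exact hcs
    · rw [show d⁻¹ * ss k = (ss k * d)⁻¹ by rw [mul_inv_rev, cs.inv_simple],
        cs.length_inv, cs.length_inv]
      exact hds
  have := le_inv cs h1
  rwa [show (c⁻¹ * ss k)⁻¹ = ss k * c by rw [mul_inv_rev, cs.inv_simple, inv_inv],
    show (d⁻¹ * ss k)⁻¹ = ss k * d by rw [mul_inv_rev, cs.inv_simple, inv_inv]] at this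

theorem mem_minCosetReps_iff {J : Set B} {w : W} :
    w ∈ minCosetReps cs J ↔ ∀ j ∈ J, ℓ w < ℓ (w * ss j) := by
  constructor
  · intro h j hj
    exact lt_length cs (h j hj)
  · intro h j hj
    exact (lt_iff cs).mpr ⟨le_of_step cs (cs.isReflection_simple j) (h j hj), h j hj⟩

theorem simple_mul_mem_minCosetReps {J : Set B} {k : B} {y : W}
    (hy : y ∈ minCosetReps cs J) (hlen : ℓ (ss k * y) < ℓ y) :
    ss k * y ∈ minCosetReps cs J := by
  rw [mem_minCosetReps_iff] at hy ⊢
  intro j hj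
  have h1 : ℓ (y * ss j) = ℓ y + 1 := by
    have := hy j hj
    have := cs.length_mul_simple y j
    omega
  have h2 : ℓ (ss k * y) + 1 = ℓ y := by
    have := cs.length_simple_mul y k
    omega
  have h3 : ℓ (y * ss j) ≤ ℓ (ss k * (y * ss j)) + 1 := by
    have := cs.length_simple_mul (y * ss j) k
    omega
  rw [mul_assoc]
  omega

end Bruhat

end BrAux

variable (cs : CoxeterSystem M W) (J : Set B) (i : B)

/-- `X⁺_{≤z}`: the set of `y ∈ W^J` with `y ≤ z`, `s_i y ∈ W^J` and `s_i y > y`. -/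
def Xplus (z : W) : Set W :=
  {y | y ∈ minCosetReps cs J ∧ bruhatLE cs y z ∧
    cs.simple i * y ∈ minCosetReps cs J ∧ bruhatLT cs y (cs.simple i * y)}

/-- `X⁻_{≤z}`: the set of `y ∈ W^J` with `y ≤ z`, `s_i y ∈ W^J` and `s_i y < y`. -/
def Xminus (z : W) : Set W :=
  {y | y ∈ minCosetReps cs J ∧ bruhatLE cs y z ∧
    cs.simple i * y ∈ minCosetReps cs J ∧ bruhatLT cs (cs.simple i * y) y}

/-- `X⁰_{≤z}`: the set of `y ∈ W^J` with `y ≤ z` and `s_i y ∉ W^J`. -/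
def Xzero (z : W) : Set W :=
  {y | y ∈ minCosetReps cs J ∧ bruhatLE cs y z ∧ cs.simple i * y ∉ minCosetReps cs J}

/-- If `x ∈ W^J`, `s x ∈ W^J` and `s x > x`, then
`s · X⁺_{≤x} = X⁻_{≤sx}`, `X⁺_{≤x} = X⁺_{≤sx}`, and `X⁰_{≤x} = X⁰_{≤sx}`. -/
theorem Xsets_of_simple_mul_gt (x : W) (hx : x ∈ minCosetReps cs J)
    (hsx : cs.simple i * x ∈ minCosetReps cs J) (hlt : bruhatLT cs x (cs.simple i * x)) :
    (fun y => cs.simple i * y) '' Xplus cs J i x = Xminus cs J i (cs.simple i * x) ∧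
    Xplus cs J i x = Xplus cs J i (cs.simple i * x) ∧
    Xzero cs J i x = Xzero cs J i (cs.simple i * x) := by
  have hxlen : cs.length x < cs.length (cs.simple i * x) := BrAux.lt_length cs hlt
  have hcanx : cs.simple i * (cs.simple i * x) = x := cs.simple_mul_simple_cancel_left i
  have hsx_desc : cs.length (cs.simple i * (cs.simple i * x)) < cs.length (cs.simple i * x) := by
    rw [hcanx]
    exact hxlen
  have hxle : bruhatLE cs x (cs.simple i * x) := hlt.1
  refine ⟨?_, ?_, ?_⟩
  · apply Set.ext
    intro z
    constructor
    · rintro ⟨y, ⟨hyM, hyx, hsyM, hylt⟩, rfl⟩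
      refine ⟨hsyM, ?_, ?_, ?_⟩
      · exact BrAux.monoL cs i hyx (BrAux.lt_length cs hylt) hxlen
      · rw [cs.simple_mul_simple_cancel_left]
        exact hyM
      · rw [cs.simple_mul_simple_cancel_left]
        exact hylt
    · rintro ⟨hzM, hzle, hszM, hszlt⟩
      refine ⟨cs.simple i * z, ⟨hszM, ?_, ?_, ?_⟩,
        by simp only [cs.simple_mul_simple_cancel_left]⟩
      · have h1 := BrAux.claimZL' cs i hsx_desc hzle (BrAux.lt_length cs hszlt)
        rwa [hcanx] at h1
      · rw [cs.simple_mul_simple_cancel_left]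
        exact hzM
      · rw [cs.simple_mul_simple_cancel_left]
        exact hszlt
  · apply Set.ext
    intro y
    constructor
    · rintro ⟨hyM, hyx, hsyM, hylt⟩
      exact ⟨hyM, hyx.trans hxle, hsyM, hylt⟩
    · rintro ⟨hyM, hyle, hsyM, hylt⟩
      refine ⟨hyM, ?_, hsyM, hylt⟩
      have h1 := BrAux.claimZL cs i hsx_desc hyle (BrAux.lt_length cs hylt)
      rwa [hcanx] at h1
  · apply Set.ext
    intro y
    constructor
    · rintro ⟨hyM, hyx, hynM⟩
      exact ⟨hyM, hyx.trans hxle, hynM⟩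
    · rintro ⟨hyM, hyle, hynM⟩
      refine ⟨hyM, ?_, hynM⟩
      have hne := cs.length_simple_mul_ne y i
      rcases Nat.lt_or_ge (cs.length (cs.simple i * y)) (cs.length y) with hdn | hup
      · exact absurd (BrAux.simple_mul_mem_minCosetReps cs hyM hdn) hynM
      · have hup2 : cs.length y < cs.length (cs.simple i * y) := by omega
        have h1 := BrAux.claimZL cs i hsx_desc hyle hup2
        rwa [hcanx] at h1
end

section
/- Fix integers k ≥ 1 and 1 ≤ r ≤ k, and an integer ℓ. For 0 ≤ a ≤ n ≤ r, let X^n_a be the set of tuples (p_1,…,p_n) ∈ ℤ^n with ℓ−k+r−a < p_1 < ⋯ < p_a ≤ ℓ < p_{a+1} < ⋯ < p_n ≤ ℓ+r−a. Then for each 0 ≤ n ≤ r, the map (p_1,…,p_n) ↦ {p_1 mod (k+1), …, p_n mod (k+1)} is a bijection from the disjoint union ⊔_{a=0}^n X^n_a onto the set of n-element subsets of ℤ/(k+1)ℤ. -/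
/-- The set `X^n_a` of strictly increasing integer tuples `(p_1,…,p_n)` with
`ℓ−k+r−a < p_1 < ⋯ < p_a ≤ ℓ < p_{a+1} < ⋯ < p_n ≤ ℓ+r−a`, bundled over `a ∈ {0,…,n}`
as a single set of pairs `(a, p)`. -/
def Xset (k r : ℕ) (l : ℤ) (n : ℕ) : Set (Σ _a : Fin (n + 1), Fin n → ℤ) :=
  {q | StrictMono q.2 ∧ ∀ j : Fin n,
    (j.val < q.1.val → (l - k + r - q.1.val < q.2 j ∧ q.2 j ≤ l)) ∧
    (q.1.val ≤ j.val → (l < q.2 j ∧ q.2 j ≤ l + r - q.1.val))}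

open Finset

namespace RMBaux

/-- canonical representative of `s` in `[c, c+k]`. -/
def zlift (k : ℕ) (c : ℤ) (s : ZMod (k + 1)) : ℤ := c + ((s.val : ℤ) - c) % ((k : ℤ) + 1)

lemma zlift_lb (k : ℕ) (c : ℤ) (s : ZMod (k + 1)) : c ≤ zlift k c s :=
  le_add_of_nonneg_right (Int.emod_nonneg _ (by positivity))

lemma zlift_ub (k : ℕ) (c : ℤ) (s : ZMod (k + 1)) : zlift k c s ≤ c + k := by
  have h := Int.emod_lt_of_pos ((s.val : ℤ) - c) (show (0:ℤ) < (k:ℤ)+1 by positivity)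
  unfold zlift; omega

lemma zlift_cast (k : ℕ) (c : ℤ) (s : ZMod (k + 1)) :
    ((zlift k c s : ℤ) : ZMod (k + 1)) = s := by
  have h2 : zlift k c s ≡ (s.val : ℤ) [ZMOD ((k : ℕ) + 1)] := by
    show zlift k c s % _ = _ % _
    unfold zlift
    push_cast
    rw [Int.add_emod, Int.emod_emod_of_dvd _ dvd_rfl, ← Int.add_emod]
    ring_nf
  calc ((zlift k c s : ℤ) : ZMod (k + 1)) = (((s.val : ℤ)) : ZMod (k + 1)) :=
        (ZMod.intCast_eq_intCast_iff _ _ _).mpr h2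
    _ = s := by
        push_cast
        rw [ZMod.natCast_val, ZMod.cast_id]

lemma cast_inj (k : ℕ) {c x y : ℤ} (hx : c ≤ x) (hx' : x ≤ c + k) (hy : c ≤ y)
    (hy' : y ≤ c + k) (h : (x : ZMod (k + 1)) = (y : ZMod (k + 1))) : x = y := by
  have h2 := (ZMod.intCast_eq_intCast_iff _ _ _).mp h
  have h3 : ((k : ℤ) + 1) ∣ y - x := by
    have := Int.ModEq.dvd h2
    push_cast at this
    exact this
  have h4 := Int.eq_zero_of_abs_lt_dvd h3 (by rw [abs_lt]; omega)
  omega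

lemma zlift_eq_of_mem (k : ℕ) {c x : ℤ} (h1 : c ≤ x) (h2 : x ≤ c + k) :
    zlift k c ((x : ℤ) : ZMod (k + 1)) = x :=
  cast_inj k (zlift_lb k c _) (zlift_ub k c _) h1 h2 (by rw [zlift_cast])

lemma zlift_inj (k : ℕ) (c : ℤ) : Function.Injective (zlift k c) := fun s t h => by
  rw [← zlift_cast k c s, ← zlift_cast k c t, h]

lemma zlift_pred (k : ℕ) (c : ℤ) (s : ZMod (k + 1)) :
    zlift k (c - 1) s = zlift k c s ∨
      (zlift k c s = c + k ∧ zlift k (c - 1) s = c - 1) := by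
  have hcast : ((zlift k (c-1) s : ℤ) : ZMod (k + 1)) = ((zlift k c s : ℤ) : ZMod (k + 1)) := by
    rw [zlift_cast, zlift_cast]
  have hd : ((k : ℤ) + 1) ∣ zlift k c s - zlift k (c-1) s := by
    have := ((ZMod.intCast_eq_intCast_iff _ _ _).mp hcast).dvd
    push_cast at this
    exact this
  obtain ⟨t, ht⟩ := hd
  have b1 := zlift_lb k c s
  have b2 := zlift_ub k c s
  have b3 := zlift_lb k (c-1) s
  have b4 := zlift_ub k (c-1) s
  have hkp : (0:ℤ) ≤ k := Int.natCast_nonneg k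
  have ht0 : 0 ≤ t := by nlinarith
  have ht1 : t ≤ 1 := by nlinarith
  interval_cases t
  · left; omega
  · right; omega

lemma card_filter_ge (n a : ℕ) (ha : a ≤ n) :
    ((univ : Finset (Fin n)).filter fun j => a ≤ j.val).card = n - a := by
  have himg : ((univ : Finset (Fin n)).filter fun j => a ≤ j.val).image Fin.val
      = Finset.Ico a n := by
    ext x
    simp only [mem_image, mem_filter, mem_univ, true_and, mem_Ico]
    constructor
    · rintro ⟨j, hj, rfl⟩; exact ⟨hj, j.isLt⟩
    · rintro ⟨h1, h2⟩; exact ⟨⟨x, h2⟩, h1, rfl⟩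
  calc ((univ : Finset (Fin n)).filter fun j => a ≤ j.val).card
      = (((univ : Finset (Fin n)).filter fun j => a ≤ j.val).image Fin.val).card :=
        (card_image_of_injective _ Fin.val_injective).symm
    _ = n - a := by rw [himg, Nat.card_Ico]

lemma mem_lower_iff {n a : ℕ} {B : Finset (Fin n)}
    (hd : ∀ i j : Fin n, i ≤ j → j ∈ B → i ∈ B) (hc : B.card = a) (j : Fin n) :
    j ∈ B ↔ j.val < a := by
  constructor
  · intro hj
    have hsub : Finset.Iic j ⊆ B := fun i hi => hd i j (Finset.mem_Iic.mp hi) hj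
    have h1 := Finset.card_le_card hsub
    rw [hc, Fin.card_Iic] at h1
    omega
  · intro hj
    by_contra hB
    have hsub : B ⊆ Finset.Iio j := by
      intro i hi
      rw [Finset.mem_Iio]
      by_contra hij
      exact hB (hd j i (not_lt.mp hij) hi)
    have h1 := Finset.card_le_card hsub
    rw [hc, Fin.card_Iio] at h1
    omega


/-- number of residues of `S` falling in the upper part `(l, l+r-a]` of the window. -/
def Ncnt (k r : ℕ) (l : ℤ) (S : Finset (ZMod (k + 1))) (a : ℕ) : ℕ :=
  (S.filter fun s => l < zlift k (l + r - a - k) s).card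

def psi (k r : ℕ) (l : ℤ) (S : Finset (ZMod (k + 1))) (a : ℕ) : ℕ :=
  Ncnt k r l S a + a

def Cond (k r n : ℕ) (l : ℤ) (S : Finset (ZMod (k + 1))) (a : ℕ) : Prop :=
  psi k r l S a = n ∧ ((l + r - a - k : ℤ) : ZMod (k + 1)) ∉ S

lemma class_shift (k : ℕ) (x : ℤ) : ((x - (k + 1) : ℤ) : ZMod (k + 1)) = (x : ZMod (k + 1)) := by
  have h := ZMod.natCast_self (k + 1)
  push_cast at h ⊢
  rw [h]
  ring

lemma Ncnt_step (k r : ℕ) (l : ℤ) (S : Finset (ZMod (k + 1))) (a : ℕ)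
    (har : a < r) (hrk : r ≤ k) :
    Ncnt k r l S a =
      Ncnt k r l S (a + 1) + (if ((l + r - a : ℤ) : ZMod (k + 1)) ∈ S then 1 else 0) := by
  set c : ℤ := l + r - a - k with hc
  have hck : c + k = l + r - a := by omega
  have hlck : l < c + k := by omega
  have hcl : c - 1 ≤ l := by omega
  have hsplit := Finset.card_filter_add_card_filter_not
    (s := S.filter fun s => l < zlift k c s) (p := fun s => zlift k c s = c + k)
  rw [Finset.filter_filter, Finset.filter_filter] at hsplit
  have hpiece2 : (S.filter fun s => l < zlift k c s ∧ ¬ zlift k c s = c + k)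
      = S.filter fun s => l < zlift k (c - 1) s := by
    apply Finset.filter_congr
    intro s _
    rcases zlift_pred k c s with h | ⟨h1, h2⟩
    · constructor
      · rintro ⟨hl, hne⟩; rw [h]; exact hl
      · intro hl
        rw [h] at hl
        refine ⟨hl, fun heq => ?_⟩
        have hub := zlift_ub k (c - 1) s
        rw [h, heq] at hub
        omega
    · constructor
      · rintro ⟨hl, hne⟩; exact absurd h1 hne
      · intro hl; rw [h2] at hl; omega
  have hpiece1 : (S.filter fun s => l < zlift k c s ∧ zlift k c s = c + k).card
      = if ((l + r - a : ℤ) : ZMod (k + 1)) ∈ S then 1 else 0 := by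
    rw [← hck]
    have hfe : (S.filter fun s => l < zlift k c s ∧ zlift k c s = c + k)
        = S.filter fun s => s = ((c + k : ℤ) : ZMod (k + 1)) := by
      apply Finset.filter_congr
      intro s _
      constructor
      · rintro ⟨-, h2⟩
        rw [← zlift_cast k c s, h2]
      · rintro rfl
        have hz := zlift_eq_of_mem k (show c ≤ c + k by omega) (le_refl (c + k))
        rw [hz]
        exact ⟨hlck, rfl⟩
    rw [hfe, Finset.filter_eq']
    split_ifs <;> simp
  have hbase : (l + (r : ℤ) - ((a + 1 : ℕ) : ℤ) - (k : ℤ)) = c - 1 := by push_cast; omega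
  have e1 : (S.filter fun s => l < zlift k c s ∧ zlift k c s = c + k).card
      + (S.filter fun s => l < zlift k (c - 1) s).card
      = (S.filter fun s => l < zlift k c s).card := by
    rw [← hpiece2]; exact hsplit
  rw [hpiece1] at e1
  unfold Ncnt
  rw [hbase, ← hc]
  omega

lemma psi_step (k r : ℕ) (l : ℤ) (S : Finset (ZMod (k + 1))) (a : ℕ)
    (har : a < r) (hrk : r ≤ k) :
    (psi k r l S (a + 1) = psi k r l S a ∧ ((l + r - a : ℤ) : ZMod (k + 1)) ∈ S)
    ∨ (psi k r l S (a + 1) = psi k r l S a + 1 ∧ ((l + r - a : ℤ) : ZMod (k + 1)) ∉ S) := by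
  have h := Ncnt_step k r l S a har hrk
  by_cases hm : ((l + r - a : ℤ) : ZMod (k + 1)) ∈ S
  · left
    rw [if_pos hm] at h
    exact ⟨by unfold psi; omega, hm⟩
  · right
    rw [if_neg hm] at h
    exact ⟨by unfold psi; omega, hm⟩

lemma psi_mono (k r : ℕ) (l : ℤ) (S : Finset (ZMod (k + 1))) (hrk : r ≤ k) :
    ∀ a b, a ≤ b → b ≤ r → psi k r l S a ≤ psi k r l S b := by
  intro a b hab hbr
  induction b with
  | zero =>
    have ha : a = 0 := by omega
    rw [ha]
  | succ b ih =>
    rcases Nat.lt_or_ge a (b + 1) with h | h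
    · have h1 : psi k r l S a ≤ psi k r l S b := ih (by omega) (by omega)
      rcases psi_step k r l S b (by omega) hrk with ⟨h2, -⟩ | ⟨h2, -⟩ <;> omega
    · have : a = b + 1 := by omega
      rw [this]

lemma Ncnt_le_card (k r : ℕ) (l : ℤ) (S : Finset (ZMod (k + 1))) (a : ℕ) :
    Ncnt k r l S a ≤ S.card := Finset.card_filter_le _ _

lemma cond_zero (k r n : ℕ) (l : ℤ) (S : Finset (ZMod (k + 1))) (hS : S.card = n)
    (hrk : r ≤ k) (h : psi k r l S 0 = n) : Cond k r n l S 0 := by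
  refine ⟨h, fun hmem => ?_⟩
  have hfil : (S.filter fun s => l < zlift k (l + r - (0 : ℕ) - k) s) = S := by
    apply Finset.eq_of_subset_of_card_le (Finset.filter_subset _ _)
    have : psi k r l S 0 = Ncnt k r l S 0 := by unfold psi; omega
    unfold Ncnt at this
    omega
  have hmm := Finset.mem_filter.mp (hfil ▸ hmem)
  rw [zlift_eq_of_mem k (le_refl _) (by omega)] at hmm
  have h2 := hmm.2
  push_cast at h2
  omega

lemma cond_succ_iff (k r n : ℕ) (l : ℤ) (S : Finset (ZMod (k + 1))) (b : ℕ)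
    (hbr : b < r) (hrk : r ≤ k) :
    Cond k r n l S (b + 1) ↔
      psi k r l S (b + 1) = n ∧ psi k r l S (b + 1) = psi k r l S b + 1 := by
  have hclass : ((l + (r : ℤ) - ((b + 1 : ℕ) : ℤ) - (k : ℤ) : ℤ) : ZMod (k + 1))
      = ((l + r - b : ℤ) : ZMod (k + 1)) := by
    rw [← class_shift k (l + r - b)]
    congr 1
    push_cast
    ring
  unfold Cond
  rw [hclass]
  rcases psi_step k r l S b hbr hrk with ⟨h1, h2⟩ | ⟨h1, h2⟩
  · constructor
    · rintro ⟨hp, hnm⟩; exact absurd h2 hnm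
    · rintro ⟨hp, hp2⟩; omega
  · constructor
    · rintro ⟨hp, -⟩; exact ⟨hp, h1⟩
    · rintro ⟨hp, -⟩; exact ⟨hp, h2⟩

lemma cond_unique (k r n : ℕ) (l : ℤ) (S : Finset (ZMod (k + 1))) (hS : S.card = n)
    (hn : n ≤ r) (hrk : r ≤ k) :
    ∀ a b : ℕ, a ≤ n → b ≤ n → Cond k r n l S a → Cond k r n l S b → a = b := by
  have key : ∀ a b : ℕ, a < b → b ≤ n → Cond k r n l S a → Cond k r n l S b → False := by
    intro a b hab hbn hca hcb
    obtain ⟨b', rfl⟩ : ∃ b', b = b' + 1 := ⟨b - 1, by omega⟩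
    have h := (cond_succ_iff k r n l S b' (by omega) hrk).mp hcb
    have hb' : psi k r l S b' = n - 1 ∧ 1 ≤ n := by omega
    have hmono := psi_mono k r l S hrk a b' (by omega) (by omega)
    have hpa : psi k r l S a = n := hca.1
    omega
  intro a b han hbn hca hcb
  rcases lt_trichotomy a b with h | h | h
  · exact absurd (key a b h hbn hca hcb) (by simp)
  · exact h
  · exact absurd (key b a h han hcb hca) (by simp)

lemma cond_exists (k r n : ℕ) (l : ℤ) (S : Finset (ZMod (k + 1))) (hS : S.card = n)
    (hn : n ≤ r) (hrk : r ≤ k) : ∃ a ≤ n, Cond k r n l S a := by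
  have hPn : n ≤ psi k r l S n := by unfold psi; omega
  have hex : ∃ a, n ≤ psi k r l S a := ⟨n, hPn⟩
  classical
  set a0 := Nat.find hex with ha0def
  have ha0 : n ≤ psi k r l S a0 := Nat.find_spec hex
  have ha0n : a0 ≤ n := Nat.find_le hPn
  clear_value a0
  rcases Nat.eq_zero_or_pos a0 with h0 | hpos
  · refine ⟨0, by omega, cond_zero k r n l S hS hrk ?_⟩
    have : psi k r l S 0 ≤ n := by
      have := Ncnt_le_card k r l S 0
      unfold psi
      omega
    rw [h0] at ha0
    omega
  · obtain ⟨b, rfl⟩ : ∃ b, a0 = b + 1 := ⟨a0 - 1, by omega⟩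
    have hb : ¬ n ≤ psi k r l S b := Nat.find_min hex (by omega)
    refine ⟨b + 1, by omega, ?_⟩
    rw [cond_succ_iff k r n l S b (by omega) hrk]
    rcases psi_step k r l S b (by omega) hrk with ⟨h1, -⟩ | ⟨h1, -⟩ <;> omega


lemma forward (k r n : ℕ) (l : ℤ) (hrk : r ≤ k) (hn : n ≤ r)
    (q : Σ _a : Fin (n + 1), Fin n → ℤ) (hq : q ∈ Xset k r l n) :
    (Finset.image (fun j => ((q.2 j : ℤ) : ZMod (k + 1))) Finset.univ).card = n ∧
    Cond k r n l (Finset.image (fun j => ((q.2 j : ℤ) : ZMod (k + 1))) Finset.univ) q.1.val ∧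
    ∀ j : Fin n, zlift k (l + r - q.1.val - k) ((q.2 j : ℤ) : ZMod (k + 1)) = q.2 j := by
  classical
  obtain ⟨a, p⟩ := q
  obtain ⟨hmono, hcond⟩ := hq
  dsimp only at hmono hcond ⊢
  set c : ℤ := l + r - a.val - k with hc
  have han : a.val ≤ n := by have := a.isLt; omega
  have har : a.val ≤ r := le_trans han hn
  have hwin : ∀ j : Fin n, c < p j ∧ p j ≤ c + k := by
    intro j
    rcases lt_or_ge j.val a.val with hj | hj
    · obtain ⟨h1, h2⟩ := (hcond j).1 hj
      constructor
      · omega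
      · omega
    · obtain ⟨h1, h2⟩ := (hcond j).2 hj
      constructor
      · omega
      · omega
  have hrep : ∀ j, zlift k c ((p j : ℤ) : ZMod (k + 1)) = p j := fun j =>
    zlift_eq_of_mem k (le_of_lt (hwin j).1) (hwin j).2
  have hinj : Set.InjOn (fun j : Fin n => ((p j : ℤ) : ZMod (k + 1)))
      ↑(univ : Finset (Fin n)) := by
    intro i _ j _ h
    have hpij : p i = p j := by
      rw [← hrep i, ← hrep j]; exact congrArg (zlift k c) h
    exact hmono.injective hpij
  have hcard : (image (fun j => ((p j : ℤ) : ZMod (k + 1))) univ).card = n := by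
    rw [Finset.card_image_of_injOn hinj, card_univ, Fintype.card_fin]
  refine ⟨hcard, ⟨?_, ?_⟩, hrep⟩
  · -- psi = n
    unfold psi Ncnt
    rw [← hc, Finset.filter_image]
    have hfe : ((univ : Finset (Fin n)).filter
        fun j => l < zlift k c ((p j : ℤ) : ZMod (k + 1)))
        = (univ : Finset (Fin n)).filter fun j => a.val ≤ j.val := by
      apply Finset.filter_congr
      intro j _
      rw [hrep j]
      constructor
      · intro hl
        by_contra hja
        push_neg at hja
        have := ((hcond j).1 hja).2
        omega
      · intro hj
        exact ((hcond j).2 hj).1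
    rw [hfe, Finset.card_image_of_injOn (hinj.mono (by simp))]
    rw [card_filter_ge n a.val han]
    omega
  · -- forbidden class not in image
    intro hmem
    rw [← hc] at hmem
    obtain ⟨j, -, hj⟩ := Finset.mem_image.mp hmem
    have hpj : p j = c := by
      have hcc : zlift k c ((c : ℤ) : ZMod (k + 1)) = c :=
        zlift_eq_of_mem k (le_refl c) (by omega)
      rw [← hrep j, hj, hcc]
    have := (hwin j).1
    omega

lemma construct (k r n : ℕ) (l : ℤ) (hrk : r ≤ k) (hn : n ≤ r)
    (S : Finset (ZMod (k + 1))) (hS : S.card = n) (a : ℕ) (ha : a ≤ n)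
    (hcond : Cond k r n l S a) :
    ∃ q ∈ Xset k r l n,
      Finset.image (fun j => ((q.2 j : ℤ) : ZMod (k + 1))) Finset.univ = S := by
  classical
  set c : ℤ := l + r - a - k with hc
  set T : Finset ℤ := S.image (zlift k c) with hT
  have hTcard : T.card = n := by rw [hT, card_image_of_injective _ (zlift_inj k c), hS]
  have hTmem : ∀ x ∈ T, c < x ∧ x ≤ c + k := by
    intro x hx
    obtain ⟨s, hs, rfl⟩ := Finset.mem_image.mp hx
    refine ⟨lt_of_le_of_ne (zlift_lb k c s) fun heq => hcond.2 ?_, zlift_ub k c s⟩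
    have hsc : s = ((c : ℤ) : ZMod (k + 1)) := by rw [← zlift_cast k c s, ← heq]
    rw [← hc, ← hsc]
    exact hs
  set p : Fin n → ℤ := fun j => T.orderEmbOfFin hTcard j with hp
  have hpmono : StrictMono p := (T.orderEmbOfFin hTcard).strictMono
  have hpmem : ∀ j, p j ∈ T := fun j => Finset.orderEmbOfFin_mem T hTcard j
  have hTimg : univ.image p = T := by
    apply Finset.eq_of_subset_of_card_le
    · intro x hx
      obtain ⟨j, -, rfl⟩ := Finset.mem_image.mp hx
      exact hpmem j
    · rw [Finset.card_image_of_injective _ hpmono.injective, card_univ,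
        Fintype.card_fin, hTcard]
  have hupper : (T.filter fun x => l < x).card = n - a := by
    have h1 : (T.filter fun x => l < x) = (S.filter fun s => l < zlift k c s).image (zlift k c) := by
      rw [hT, Finset.filter_image]
    rw [h1, card_image_of_injective _ (zlift_inj k c)]
    have h2 := hcond.1
    unfold psi Ncnt at h2
    rw [← hc] at h2
    omega
  have hsplit : (T.filter fun x => x ≤ l).card + (T.filter fun x => l < x).card = n := by
    have h3 := Finset.card_filter_add_card_filter_not (s := T) (p := fun x => x ≤ l)
    simp only [not_le] at h3
    omega
  have hBcard : ((univ : Finset (Fin n)).filter fun j => p j ≤ l).card = a := by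
    have h1 : T.filter (fun x => x ≤ l) = ((univ : Finset (Fin n)).filter fun j => p j ≤ l).image p := by
      rw [← hTimg, Finset.filter_image]
    rw [h1, card_image_of_injective _ hpmono.injective] at hsplit
    omega
  have hB : ∀ j : Fin n, p j ≤ l ↔ j.val < a := by
    intro j
    have h4 := mem_lower_iff (B := (univ : Finset (Fin n)).filter fun j => p j ≤ l)
      (fun i j hij hjB => Finset.mem_filter.mpr
        ⟨Finset.mem_univ _, le_trans (hpmono.monotone hij) (Finset.mem_filter.mp hjB).2⟩)
      hBcard j
    simpa using h4
  refine ⟨⟨⟨a, by omega⟩, p⟩, ⟨hpmono, fun j => ⟨fun hj => ?_, fun hj => ?_⟩⟩, ?_⟩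
  · simp only [Fin.val_mk] at hj ⊢
    have h1 := hTmem (p j) (hpmem j)
    have h2 := (hB j).mpr hj
    constructor
    · omega
    · exact h2
  · simp only [Fin.val_mk] at hj ⊢
    have h1 := hTmem (p j) (hpmem j)
    have h2 : ¬ p j ≤ l := fun hle => by have := (hB j).mp hle; omega
    constructor
    · omega
    · omega
  · have h1 : Finset.image (fun j => ((p j : ℤ) : ZMod (k + 1))) univ
        = T.image (fun x : ℤ => (x : ZMod (k + 1))) := by
      rw [← hTimg, Finset.image_image]
      rfl
    rw [h1, hT, Finset.image_image]
    have h2 : ((fun x : ℤ => (x : ZMod (k + 1))) ∘ zlift k c) = id :=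
      funext fun s => zlift_cast k c s
    rw [h2, Finset.image_id]

end RMBaux

/-- For `1 ≤ r ≤ k`, `ℓ ∈ ℤ` and `0 ≤ n ≤ r`, the map
`(p_1,…,p_n) ↦ {p_1 mod (k+1), …, p_n mod (k+1)}` is a bijection from the disjoint union
`⊔_{a=0}^n X^n_a` onto the set of `n`-element subsets of `ℤ/(k+1)ℤ`. -/
theorem residue_map_bijection (k r : ℕ) (hk : 1 ≤ k) (hr1 : 1 ≤ r) (hrk : r ≤ k)
    (l : ℤ) (n : ℕ) (hn : n ≤ r) :
    Set.BijOn
      (fun q : Σ _a : Fin (n + 1), Fin n → ℤ =>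
        Finset.image (fun j => ((q.2 j : ℤ) : ZMod (k + 1))) Finset.univ)
      (Xset k r l n)
      {S : Finset (ZMod (k + 1)) | S.card = n} := by
  classical
  open RMBaux in
  refine ⟨?_, ?_, ?_⟩
  · -- MapsTo
    intro q hq
    exact (RMBaux.forward k r n l hrk hn q hq).1
  · -- InjOn
    intro q1 hq1 q2 hq2 himg
    dsimp only at himg
    obtain ⟨hc1, hcond1, hrep1⟩ := RMBaux.forward k r n l hrk hn q1 hq1
    obtain ⟨hc2, hcond2, hrep2⟩ := RMBaux.forward k r n l hrk hn q2 hq2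
    rw [← himg] at hcond2 hc2
    have hav : q1.1.val = q2.1.val :=
      RMBaux.cond_unique k r n l _ hc1 hn hrk _ _
        (by have := q1.1.isLt; omega) (by have := q2.1.isLt; omega) hcond1 hcond2
    obtain ⟨a1, p1⟩ := q1
    obtain ⟨a2, p2⟩ := q2
    dsimp only at hav himg hrep1 hrep2 hcond1 hcond2 hc1 hc2
    have haf : a1 = a2 := Fin.ext hav
    subst haf
    set c : ℤ := l + r - a1.val - k with hc
    set S : Finset (ZMod (k + 1)) := Finset.image (fun j => ((p1 j : ℤ) : ZMod (k + 1))) Finset.univ with hSdef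
    set T : Finset ℤ := S.image (RMBaux.zlift k c) with hT
    have hTcard : T.card = n := by
      rw [hT, card_image_of_injective _ (RMBaux.zlift_inj k c), hc1]
    have hm1 : ∀ j, p1 j ∈ T := by
      intro j
      have hmem : ((p1 j : ℤ) : ZMod (k + 1)) ∈ S :=
        Finset.mem_image_of_mem _ (Finset.mem_univ j)
      have := Finset.mem_image_of_mem (RMBaux.zlift k c) hmem
      rwa [hrep1 j] at this
    have hm2 : ∀ j, p2 j ∈ T := by
      intro j
      have hmem : ((p2 j : ℤ) : ZMod (k + 1)) ∈ S := by
        rw [himg]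
        exact Finset.mem_image_of_mem _ (Finset.mem_univ j)
      have := Finset.mem_image_of_mem (RMBaux.zlift k c) hmem
      rwa [hrep2 j] at this
    have he1 : p1 = ⇑(T.orderEmbOfFin hTcard) :=
      Finset.orderEmbOfFin_unique hTcard hm1 hq1.1
    have he2 : p2 = ⇑(T.orderEmbOfFin hTcard) :=
      Finset.orderEmbOfFin_unique hTcard hm2 hq2.1
    have : p1 = p2 := he1.trans he2.symm
    rw [this]
  · -- SurjOn
    intro S hS
    obtain ⟨a, ha, hcond⟩ := RMBaux.cond_exists k r n l S hS hn hrk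
    obtain ⟨q, hq, himg⟩ := RMBaux.construct k r n l hrk hn S hS a ha hcond
    exact ⟨q, hq, himg⟩
end

section
/- Let k ≥ 1 and let π be the element of the extended affine symmetric group Ŝ_{k+1} satisfying π^{k+1} = id and π s_i π^{-1} = s_{i+1} (indices mod k+1). For 1 ≤ i ≤ k let R_i = (i^{k+1−i}) be the k-rectangle and x_{R_i} the associated affine Grassmannian element. Then the translation element t_{−ϖ_i^∨} ∈ Ŝ_{k+1} ≅ S_{k+1} ⋉ P^∨ associated to the negative of the i-th fundamental coweight equals π^{−i} x_{R_i}. -/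
noncomputable section

/-- Translation of `ℤ` by `k+1`. -/
def tauPerm (k : ℕ) : Equiv.Perm ℤ := Equiv.addRight ((k : ℤ) + 1)

/-- The extended affine symmetric group of `GL_{k+1}`: the group of bijections `f : ℤ → ℤ`
with `f(x + (k+1)) = f(x) + (k+1)`, i.e. the centralizer of the translation `tauPerm k`. -/
def AffG (k : ℕ) : Subgroup (Equiv.Perm ℤ) := Subgroup.centralizer {tauPerm k}

/-- The element `π : x ↦ x + 1`. -/
def piElem (k : ℕ) : AffG k :=
  ⟨Equiv.addRight 1, by
    intro y hy
    rw [Set.mem_singleton_iff] at hy; subst hy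
    ext x
    simp [tauPerm, Equiv.Perm.mul_apply]
    ring⟩

/-- The translation `tauPerm k`, as an element of `AffG k`. -/
def cTau (k : ℕ) : AffG k :=
  ⟨tauPerm k, by intro y hy; rw [Set.mem_singleton_iff] at hy; subst hy; rfl⟩

/-- The central subgroup generated by the translation by `k+1`; quotienting by it realizes
the extended affine symmetric group `Ŝ_{k+1}` of `SL_{k+1}`, in which `π^{k+1} = id` and
`π s_i π⁻¹ = s_{i+1}`. -/
def Zc (k : ℕ) : Subgroup (AffG k) := Subgroup.zpowers (cTau k)

instance Zc_normal (k : ℕ) : (Zc k).Normal := by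
  constructor
  intro n hn g
  obtain ⟨m, rfl⟩ := Subgroup.mem_zpowers_iff.mp hn
  have hcomm : Commute g (cTau k) := by
    apply Subtype.ext
    simpa [cTau] using (g.2 (tauPerm k) (Set.mem_singleton _)).symm
  refine Subgroup.mem_zpowers_iff.mpr ⟨m, ?_⟩
  rw [(hcomm.zpow_right m).eq, mul_assoc, mul_inv_cancel, mul_one]

/-- The affine simple reflection `s_i`, as a function: it swaps `x ↔ x+1` for all
`x ≡ i mod (k+1)` (and is the identity in the degenerate case `i + 1 = i`). -/
def sFun (k : ℕ) (i : ZMod (k + 1)) : ℤ → ℤ := fun x =>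
  if i + 1 = i then x
  else if (x : ZMod (k + 1)) = i then x + 1
  else if (x : ZMod (k + 1)) = i + 1 then x - 1 else x

theorem sFun_involutive (k : ℕ) (i : ZMod (k + 1)) : Function.Involutive (sFun k i) := by
  intro x
  unfold sFun
  by_cases h : i + 1 = i
  · simp [h]
  · simp only [if_neg h]
    by_cases h1 : (x : ZMod (k + 1)) = i
    · rw [if_pos h1]
      have hc : ((x + 1 : ℤ) : ZMod (k + 1)) = i + 1 := by push_cast [h1]; ring
      rw [if_neg (by rw [hc]; exact h), if_pos hc]
      ring
    · by_cases h2 : (x : ZMod (k + 1)) = i + 1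
      · rw [if_neg h1, if_pos h2]
        have hc : ((x - 1 : ℤ) : ZMod (k + 1)) = i := by push_cast [h2]; ring
        rw [if_pos hc]
        ring
      · rw [if_neg h1, if_neg h2, if_neg h1, if_neg h2]

/-- The affine simple reflection `s_i` as an element of `AffG k`. -/
def sAff (k : ℕ) (i : ZMod (k + 1)) : AffG k :=
  ⟨(sFun_involutive k i).toPerm, by
    intro y hy
    rw [Set.mem_singleton_iff] at hy; subst hy
    ext x
    simp only [Equiv.Perm.mul_apply, Function.Involutive.coe_toPerm, tauPerm,
      Equiv.coe_addRight]
    have hres : ((x + ((k : ℤ) + 1) : ℤ) : ZMod (k + 1)) = (x : ZMod (k + 1)) := by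
      push_cast; simp
    unfold sFun
    rw [hres]
    split_ifs <;> ring⟩

/-- The translation element `t_β : x ↦ x + (k+1)·β(x mod (k+1))` for `β ∈ ℤ^{k+1}`. -/
def tElem (k : ℕ) (beta : ZMod (k + 1) → ℤ) : AffG k :=
  ⟨{ toFun := fun x => x + ((k : ℤ) + 1) * beta (x : ZMod (k + 1))
     invFun := fun x => x - ((k : ℤ) + 1) * beta (x : ZMod (k + 1))
     left_inv := by
       intro x
       have hres : ((x + ((k : ℤ) + 1) * beta (x : ZMod (k + 1)) : ℤ) : ZMod (k + 1))
           = (x : ZMod (k + 1)) := by push_cast; simp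
       simp only [hres]
       ring
     right_inv := by
       intro x
       have hres : ((x - ((k : ℤ) + 1) * beta (x : ZMod (k + 1)) : ℤ) : ZMod (k + 1))
           = (x : ZMod (k + 1)) := by push_cast; simp
       simp only [hres]
       ring }, by
    intro y hy
    rw [Set.mem_singleton_iff] at hy; subst hy
    ext x
    simp only [Equiv.Perm.mul_apply, tauPerm, Equiv.coe_addRight, Equiv.coe_fn_mk]
    have hres : ((x + ((k : ℤ) + 1) : ℤ) : ZMod (k + 1)) = (x : ZMod (k + 1)) := by
      push_cast; simp
    rw [hres]
    ring⟩

/-- The Lapointe–Morse word of a `k`-bounded partition `λ = [λ_1, …, λ_ℓ]`: the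
`(k+1)`-residues `c − r` of the boxes of `λ`, read right to left in each row, bottom row
to top row. -/
def lmWord (k : ℕ) (lam : List ℕ) : List (ZMod (k + 1)) :=
  ((List.range lam.length).reverse.map (fun r0 =>
    (List.range (lam.getD r0 0)).reverse.map
      (fun c0 => ((((c0 : ℤ) + 1) - ((r0 : ℤ) + 1) : ℤ) : ZMod (k + 1))))).flatten

/-- The affine Grassmannian element `x_λ` of a `k`-bounded partition, in the model `AffG k`. -/
def xPart (k : ℕ) (lam : List ℕ) : AffG k :=
  ((lmWord k lam).map (sAff k)).prod

open Classical in
/-- The indicator of the residues `{1, …, i}` in `ℤ/(k+1)ℤ`: the `GL` lift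
`e_1 + ⋯ + e_i` of the `i`-th fundamental coweight `ϖ_i^∨`. -/
def omegaInd (k i : ℕ) : ZMod (k + 1) → ℤ := fun j =>
  if ∃ m : ℕ, 1 ≤ m ∧ m ≤ i ∧ (m : ZMod (k + 1)) = j then 1 else 0


section Aux

open Classical

variable {k : ℕ}

lemma natCast_inj_lt {a b : ℕ} (ha : a < k + 1) (hb : b < k + 1)
    (h : (a : ZMod (k + 1)) = b) : a = b := by
  have h1 := ZMod.val_cast_of_lt ha
  have h2 := ZMod.val_cast_of_lt hb
  rw [h] at h1; omega

lemma myOneNeZero (hk : 1 ≤ k) : (1 : ZMod (k + 1)) ≠ 0 := by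
  intro h
  have : ((1 : ℕ) : ZMod (k + 1)) = ((0 : ℕ) : ZMod (k + 1)) := by push_cast; exact h
  have := natCast_inj_lt (by omega) (by omega) this
  omega

lemma succ_ne_self' (hk : 1 ≤ k) (j : ZMod (k + 1)) : j + 1 ≠ j := by
  intro h
  have : (1 : ZMod (k + 1)) = 0 := by
    have := sub_eq_zero.mpr h
    simpa [add_sub_cancel_left] using (by linear_combination this : (1 : ZMod (k+1)) = 0)
  exact myOneNeZero hk this

lemma sFun_fix (hk : 1 ≤ k) (j : ZMod (k + 1)) (x : ℤ)
    (h1 : (x : ZMod (k + 1)) ≠ j) (h2 : (x : ZMod (k + 1)) ≠ j + 1) : sFun k j x = x := by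
  unfold sFun
  rw [if_neg (succ_ne_self' hk j), if_neg h1, if_neg h2]

lemma sFun_up (hk : 1 ≤ k) (j : ZMod (k + 1)) (x : ℤ)
    (h1 : (x : ZMod (k + 1)) = j) : sFun k j x = x + 1 := by
  unfold sFun
  rw [if_neg (succ_ne_self' hk j), if_pos h1]

lemma sFun_down (hk : 1 ≤ k) (j : ZMod (k + 1)) (x : ℤ)
    (h1 : (x : ZMod (k + 1)) = j + 1) : sFun k j x = x - 1 := by
  unfold sFun
  have : (x : ZMod (k + 1)) ≠ j := by rw [h1]; exact succ_ne_self' hk j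
  rw [if_neg (succ_ne_self' hk j), if_neg this, if_pos h1]

/-- The word of one row of the rectangle, with `j` boxes, at row index `r0`. -/
def rowWord (k j r0 : ℕ) : List (ZMod (k + 1)) :=
  (List.range j).reverse.map
    (fun c0 => ((((c0 : ℤ) + 1) - ((r0 : ℤ) + 1) : ℤ) : ZMod (k + 1)))

lemma classify (i : ℕ) (hik : i ≤ k) (u : ZMod (k + 1)) :
    (∃ m : ℕ, 1 ≤ m ∧ m ≤ i ∧ (m : ZMod (k + 1)) = u) ∨
    (∃ t : ℕ, 1 ≤ t ∧ t ≤ k + 1 - i ∧ u = ((i + t : ℕ) : ZMod (k + 1))) := by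
  obtain ⟨a, ha, hau⟩ : ∃ a : ℕ, a < k + 1 ∧ (a : ZMod (k + 1)) = u :=
    ⟨u.val, ZMod.val_lt u, by simp⟩
  rcases Nat.lt_or_ge a 1 with h | h
  · right
    refine ⟨k + 1 - i, by omega, le_refl _, ?_⟩
    have : (i + (k + 1 - i) : ℕ) = k + 1 := by omega
    rw [this, ZMod.natCast_self, ← hau]
    have : a = 0 := by omega
    simp [this]
  · rcases Nat.lt_or_ge i a with h2 | h2
    · right
      refine ⟨a - i, by omega, by omega, ?_⟩
      have : (i + (a - i) : ℕ) = a := by omega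
      rw [this, hau]
    · left; exact ⟨a, h, h2, hau⟩

lemma t_unique (i : ℕ) (hi1 : 1 ≤ i) (hik : i ≤ k) {t t' : ℕ}
    (h1 : 1 ≤ t) (h2 : t ≤ k + 1 - i) (h1' : 1 ≤ t') (h2' : t' ≤ k + 1 - i)
    (h : ((i + t : ℕ) : ZMod (k + 1)) = ((i + t' : ℕ) : ZMod (k + 1))) : t = t' := by
  rcases Nat.lt_or_ge (i + t) (k + 1) with hlt | hge
  · rcases Nat.lt_or_ge (i + t') (k + 1) with hlt' | hge'
    · have := natCast_inj_lt hlt hlt' h; omega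
    · have ht' : (i + t' : ℕ) = k + 1 := by omega
      rw [ht', ZMod.natCast_self] at h
      have : (i + t : ℕ) = 0 := natCast_inj_lt hlt (by omega) (by rw [h]; simp)
      omega
  · have ht : (i + t : ℕ) = k + 1 := by omega
    rcases Nat.lt_or_ge (i + t') (k + 1) with hlt' | hge'
    · rw [ht, ZMod.natCast_self] at h
      have : (i + t' : ℕ) = 0 := natCast_inj_lt hlt' (by omega) h.symm
      omega
    · omega

lemma notin_one_i (i : ℕ) (hik : i ≤ k) {a : ℕ} (ha1 : i < a) (ha2 : a ≤ k) :
    ¬ ∃ m : ℕ, 1 ≤ m ∧ m ≤ i ∧ (m : ZMod (k + 1)) = ((a : ℕ) : ZMod (k + 1)) := by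
  rintro ⟨m, hm1, hm2, hm⟩
  have := natCast_inj_lt (by omega : m < k + 1) (by omega : a < k + 1) hm
  omega

lemma row_fold (hk : 1 ≤ k) (j : ℕ) (hj : j ≤ k) (r0 : ℕ) (z : ℤ) :
    (rowWord k j r0).foldr (sFun k) z =
      if ((z : ZMod (k + 1)) + (r0 : ℕ) = 0) then z + j
      else if ∃ m : ℕ, 1 ≤ m ∧ m ≤ j ∧ (m : ZMod (k + 1)) = (z : ZMod (k + 1)) + (r0 : ℕ)
        then z - 1 else z := by
  induction j with
  | zero =>
    simp only [rowWord, List.range_zero, List.reverse_nil, List.map_nil, List.foldr_nil]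
    split_ifs with h1 h2
    · simp
    · omega
    · rfl
  | succ j ih =>
    have hj' : j ≤ k := by omega
    have hstep : rowWord k (j + 1) r0 =
        ((((j : ℤ) + 1) - ((r0 : ℤ) + 1) : ℤ) : ZMod (k + 1)) :: rowWord k j r0 := by
      unfold rowWord
      rw [List.range_succ, List.reverse_append]
      simp
    have hidx : ((((j : ℤ) + 1) - ((r0 : ℤ) + 1) : ℤ) : ZMod (k + 1))
        = ((j : ℕ) : ZMod (k + 1)) - ((r0 : ℕ) : ZMod (k + 1)) := by push_cast; ring
    rw [hstep, List.foldr_cons, ih hj', hidx]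
    set u : ZMod (k + 1) := (z : ZMod (k + 1)) + (r0 : ℕ) with hu
    by_cases h0 : u = 0
    · rw [if_pos h0, if_pos h0]
      have hres : ((z + (j : ℕ) : ℤ) : ZMod (k + 1)) = (j : ℕ) - (r0 : ℕ) := by
        push_cast
        have : (z : ZMod (k + 1)) = -(r0 : ℕ) := by
          have := h0; rw [hu] at this; linear_combination this
        rw [this]; ring
      rw [sFun_up hk _ _ hres]
      push_cast; ring
    · rw [if_neg h0, if_neg h0]
      by_cases hm : ∃ m : ℕ, 1 ≤ m ∧ m ≤ j ∧ (m : ZMod (k + 1)) = u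
      · rw [if_pos hm]
        obtain ⟨m, hm1, hm2, hmu⟩ := hm
        have hzres : (z : ZMod (k + 1)) = (m : ℕ) - (r0 : ℕ) := by
          have : u - (r0 : ℕ) = (z : ZMod (k + 1)) := by rw [hu]; ring
          rw [← this, ← hmu]
        have hres : ((z - 1 : ℤ) : ZMod (k + 1))
            = (((m - 1 : ℕ) : ℕ) : ZMod (k + 1)) - ((r0 : ℕ) : ZMod (k + 1)) := by
          push_cast [Nat.cast_sub hm1]
          rw [hzres]; push_cast; ring
        have hfix : sFun k ((j : ℕ) - (r0 : ℕ)) (z - 1) = z - 1 := by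
          apply sFun_fix hk
          · rw [hres]; intro h
            have : (((m - 1 : ℕ)) : ZMod (k + 1)) = ((j : ℕ) : ZMod (k + 1)) := by
              linear_combination h
            have := natCast_inj_lt (by omega : m - 1 < k + 1) (by omega : j < k + 1) this
            omega
          · rw [hres]; intro h
            have : (((m - 1 : ℕ)) : ZMod (k + 1)) = (((j + 1 : ℕ)) : ZMod (k + 1)) := by
              push_cast; linear_combination h
            have := natCast_inj_lt (by omega : m - 1 < k + 1) (by omega : j + 1 < k + 1) this
            omega
        rw [hfix, if_pos ⟨m, hm1, by omega, hmu⟩]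
      · by_cases hj1 : u = (((j + 1 : ℕ)) : ZMod (k + 1))
        · rw [if_neg hm]
          have hzres : (z : ZMod (k + 1)) = ((j : ℕ) - (r0 : ℕ)) + 1 := by
            have : u - (r0 : ℕ) = (z : ZMod (k + 1)) := by rw [hu]; ring
            rw [← this, hj1]; push_cast; ring
          rw [sFun_down hk _ _ hzres]
          rw [if_pos ⟨j + 1, by omega, le_refl _, by rw [hj1]⟩]
        · rw [if_neg hm]
          have hfix : sFun k ((j : ℕ) - (r0 : ℕ)) z = z := by
            apply sFun_fix hk
            · intro h
              have huj : u = ((j : ℕ) : ZMod (k + 1)) := by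
                rw [hu]; linear_combination h
              rcases Nat.eq_zero_or_pos j with hj0 | hj0
              · apply h0; rw [huj, hj0]; simp
              · exact hm ⟨j, hj0, le_refl _, huj.symm⟩
            · intro h
              apply hj1
              rw [hu]; push_cast; linear_combination h
          rw [hfix]
          rw [if_neg ?_]
          rintro ⟨m, hm1, hm2, hmu⟩
          rcases Nat.lt_or_ge m (j + 1) with hlt | hge
          · exact hm ⟨m, hm1, by omega, hmu⟩
          · have : m = j + 1 := by omega
            subst this
            exact hj1 hmu.symm

/-- Iterated application of the rows `r0 = 0, 1, …, m-1`. -/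
def Ffold (k i m : ℕ) (z : ℤ) : ℤ :=
  (List.range m).foldl (fun acc r0 => (rowWord k i r0).foldr (sFun k) acc) z

lemma Ffold_succ (i m : ℕ) (z : ℤ) :
    Ffold k i (m + 1) z = (rowWord k i m).foldr (sFun k) (Ffold k i m z) := by
  unfold Ffold
  rw [List.range_succ, List.foldl_append, List.foldl_cons, List.foldl_nil]

lemma outer_fold (hk : 1 ≤ k) (i : ℕ) (hi1 : 1 ≤ i) (hik : i ≤ k) (m : ℕ)
    (hm : m ≤ k + 1 - i) (z : ℤ) :
    Ffold k i m z =
      if ∃ m' : ℕ, 1 ≤ m' ∧ m' ≤ i ∧ (m' : ZMod (k + 1)) = (z : ZMod (k + 1)) then z - m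
      else if ∃ t : ℕ, 1 ≤ t ∧ t ≤ (k + 1 - i) - m ∧
          (z : ZMod (k + 1)) = ((i + t : ℕ) : ZMod (k + 1)) then z
      else z + i := by
  induction m with
  | zero =>
    simp only [Ffold, List.range_zero, List.foldl_nil]
    split_ifs with h1 h2
    · simp
    · rfl
    · exfalso
      rcases classify i hik (z : ZMod (k + 1)) with h | ⟨t, ht1, ht2, ht⟩
      · exact h1 h
      · exact h2 ⟨t, ht1, by omega, ht⟩
  | succ m ih =>
    have hm' : m ≤ k + 1 - i := by omega
    rw [Ffold_succ]
    by_cases hA : ∃ m' : ℕ, 1 ≤ m' ∧ m' ≤ i ∧ (m' : ZMod (k + 1)) = (z : ZMod (k + 1))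
    · have hwval : Ffold k i m z = z - m := by rw [ih hm', if_pos hA]
      obtain ⟨m', hm1, hm2, hmz⟩ := hA
      have hres : ((z - (m : ℕ) : ℤ) : ZMod (k + 1)) + (m : ℕ)
          = ((m' : ℕ) : ZMod (k + 1)) := by
        push_cast; rw [← hmz]; ring
      have hne0 : ¬ (((z - (m : ℕ) : ℤ) : ZMod (k + 1)) + (m : ℕ) = 0) := by
        rw [hres]; intro h
        have := natCast_inj_lt (by omega : m' < k + 1) (by omega : 0 < k + 1)
          (by rw [h]; simp)
        omega
      have hex : ∃ m'' : ℕ, 1 ≤ m'' ∧ m'' ≤ i ∧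
          (m'' : ZMod (k + 1)) = ((z - (m : ℕ) : ℤ) : ZMod (k + 1)) + (m : ℕ) :=
        ⟨m', hm1, hm2, hres.symm⟩
      rw [hwval, row_fold hk i hik m, if_neg hne0, if_pos hex,
        if_pos ⟨m', hm1, hm2, hmz⟩]
      push_cast; ring
    · obtain ⟨t, ht1, ht2, htz⟩ : ∃ t : ℕ, 1 ≤ t ∧ t ≤ k + 1 - i ∧
          (z : ZMod (k + 1)) = ((i + t : ℕ) : ZMod (k + 1)) := by
        rcases classify i hik (z : ZMod (k + 1)) with h | h
        · exact absurd h hA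
        · exact h
      by_cases hB : t ≤ (k + 1 - i) - m
      · have hwval : Ffold k i m z = z := by
          rw [ih hm', if_neg hA, if_pos ⟨t, ht1, hB, htz⟩]
        rw [hwval, row_fold hk i hik m]
        by_cases hB2 : t ≤ (k + 1 - i) - (m + 1)
        · have hval : (z : ZMod (k + 1)) + (m : ℕ)
              = (((i + t + m : ℕ)) : ZMod (k + 1)) := by
            rw [htz]; push_cast; ring
          have hne0 : ¬ ((z : ZMod (k + 1)) + (m : ℕ) = 0) := by
            rw [hval]; intro h
            have := natCast_inj_lt (by omega : i + t + m < k + 1) (by omega : 0 < k + 1)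
              (by rw [h]; simp)
            omega
          have hnex : ¬ ∃ m'' : ℕ, 1 ≤ m'' ∧ m'' ≤ i ∧
              (m'' : ZMod (k + 1)) = (z : ZMod (k + 1)) + (m : ℕ) := by
            rintro ⟨m'', h1, h2, h3⟩
            rw [hval] at h3
            have := natCast_inj_lt (by omega : m'' < k + 1)
              (by omega : i + t + m < k + 1) h3
            omega
          rw [if_neg hne0, if_neg hnex, if_neg hA, if_pos ⟨t, ht1, hB2, htz⟩]
        · have hsum : i + t + m = k + 1 := by omega
          have hval : (z : ZMod (k + 1)) + (m : ℕ) = 0 := by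
            rw [htz]
            have : (((i + t : ℕ)) : ZMod (k + 1)) + ((m : ℕ) : ZMod (k + 1))
                = (((i + t + m : ℕ)) : ZMod (k + 1)) := by push_cast; ring
            rw [this, hsum, ZMod.natCast_self]
          have hnex2 : ¬ ∃ t' : ℕ, 1 ≤ t' ∧ t' ≤ (k + 1 - i) - (m + 1) ∧
              (z : ZMod (k + 1)) = ((i + t' : ℕ) : ZMod (k + 1)) := by
            rintro ⟨t', ht1', ht2', htz'⟩
            have : t' = t :=
              t_unique i hi1 hik ht1' (by omega) ht1 ht2 (by rw [← htz, ← htz'])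
            omega
          rw [if_pos hval, if_neg hA, if_neg hnex2]
      · have hBnot : ¬ ∃ t' : ℕ, 1 ≤ t' ∧ t' ≤ (k + 1 - i) - m ∧
            (z : ZMod (k + 1)) = ((i + t' : ℕ) : ZMod (k + 1)) := by
          rintro ⟨t', ht1', ht2', htz'⟩
          have : t' = t :=
            t_unique i hi1 hik ht1' (by omega) ht1 ht2 (by rw [← htz, ← htz'])
          omega
        have hwval : Ffold k i m z = z + i := by
          rw [ih hm', if_neg hA, if_neg hBnot]
        obtain ⟨s, hs1, hs2, hs3⟩ : ∃ s : ℕ, 1 ≤ s ∧ s ≤ m ∧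
            i + t + i + m = (k + 1) + (i + s) :=
          ⟨t + m - (k + 1 - i), by omega, by omega, by omega⟩
        have hval : ((z + (i : ℕ) : ℤ) : ZMod (k + 1)) + (m : ℕ)
            = (((i + s : ℕ)) : ZMod (k + 1)) := by
          have hns : ((k + 1 + (i + s) : ℕ) : ZMod (k + 1))
              = ((i + s : ℕ) : ZMod (k + 1)) := by
            rw [Nat.cast_add, ZMod.natCast_self, zero_add]
          have hcast := congrArg (fun n : ℕ => (n : ZMod (k + 1))) hs3
          push_cast at hcast hns htz ⊢
          linear_combination htz + hcast + hns
        have hne0 : ¬ (((z + (i : ℕ) : ℤ) : ZMod (k + 1)) + (m : ℕ) = 0) := by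
          rw [hval]; intro h
          have := natCast_inj_lt (by omega : i + s < k + 1) (by omega : 0 < k + 1)
            (by rw [h]; simp)
          omega
        have hnex : ¬ ∃ m'' : ℕ, 1 ≤ m'' ∧ m'' ≤ i ∧
            (m'' : ZMod (k + 1)) = ((z + (i : ℕ) : ℤ) : ZMod (k + 1)) + (m : ℕ) := by
          rintro ⟨m'', h1, h2, h3⟩
          rw [hval] at h3
          have := natCast_inj_lt (by omega : m'' < k + 1) (by omega : i + s < k + 1) h3
          omega
        have hnex2 : ¬ ∃ t' : ℕ, 1 ≤ t' ∧ t' ≤ (k + 1 - i) - (m + 1) ∧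
            (z : ZMod (k + 1)) = ((i + t' : ℕ) : ZMod (k + 1)) := by
          rintro ⟨t', ht1', ht2', htz'⟩
          have : t' = t :=
            t_unique i hi1 hik ht1' (by omega) ht1 ht2 (by rw [← htz, ← htz'])
          omega
        have hzi : (z : ℤ) + (i : ℕ) = z + (i : ℤ) := by push_cast; ring
        rw [hwval]
        rw [show (z + (i : ℤ)) = (z + (i : ℕ) : ℤ) by push_cast; ring]
        rw [row_fold hk i hik m, if_neg hne0, if_neg hnex, if_neg hA, if_neg hnex2]

lemma prod_sAff_apply (L : List (ZMod (k + 1))) (z : ℤ) :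
    (((L.map (sAff k)).prod : AffG k) : Equiv.Perm ℤ) z = L.foldr (sFun k) z := by
  induction L with
  | nil => simp
  | cons a L ih =>
    rw [List.map_cons, List.prod_cons, List.foldr_cons]
    rw [MulMemClass.coe_mul, Equiv.Perm.mul_apply, ih]
    rfl

lemma lmWord_rect (i : ℕ) :
    lmWord k (List.replicate (k + 1 - i) i) =
      ((List.range (k + 1 - i)).reverse.map (fun r0 => rowWord k i r0)).flatten := by
  unfold lmWord rowWord
  rw [List.length_replicate]
  congr 1
  apply List.map_congr_left
  intro r0 hr0
  rw [List.mem_reverse, List.mem_range] at hr0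
  rw [List.getD_eq_getElem _ _ (by simpa using hr0)]
  simp

lemma flatten_fold (i M : ℕ) (z : ℤ) :
    (((List.range M).reverse.map (fun r0 => rowWord k i r0)).flatten).foldr (sFun k) z
      = Ffold k i M z := by
  induction M generalizing z with
  | zero => simp [Ffold]
  | succ M ih =>
    rw [List.range_succ, List.reverse_append]
    simp only [List.reverse_cons, List.reverse_nil, List.nil_append, List.singleton_append,
      List.map_cons, List.flatten_cons, List.foldr_append]
    rw [ih, Ffold_succ]

lemma piElem_pow_apply (i : ℕ) (z : ℤ) :
    ((piElem k ^ i : AffG k) : Equiv.Perm ℤ) z = z + i := by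
  induction i generalizing z with
  | zero => simp
  | succ i ih =>
    rw [pow_succ, MulMemClass.coe_mul, Equiv.Perm.mul_apply]
    have : ((piElem k : AffG k) : Equiv.Perm ℤ) z = z + 1 := rfl
    rw [this, ih]
    push_cast; ring

lemma key_eq (hk : 1 ≤ k) (i : ℕ) (hi1 : 1 ≤ i) (hik : i ≤ k) :
    piElem k ^ i * tElem k (fun j => - omegaInd k i j)
      = xPart k (List.replicate (k + 1 - i) i) := by
  apply Subtype.ext
  apply Equiv.ext
  intro z
  rw [MulMemClass.coe_mul, Equiv.Perm.mul_apply]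
  have htel : ((tElem k (fun j => - omegaInd k i j) : AffG k) : Equiv.Perm ℤ) z
      = z + ((k : ℤ) + 1) * (- omegaInd k i (z : ZMod (k + 1))) := rfl
  rw [htel, piElem_pow_apply]
  have hx : ((xPart k (List.replicate (k + 1 - i) i) : AffG k) : Equiv.Perm ℤ) z
      = Ffold k i (k + 1 - i) z := by
    rw [xPart, prod_sAff_apply, lmWord_rect, flatten_fold]
  rw [hx, outer_fold hk i hi1 hik (k + 1 - i) (le_refl _) z]
  unfold omegaInd
  by_cases hA : ∃ m' : ℕ, 1 ≤ m' ∧ m' ≤ i ∧ (m' : ZMod (k + 1)) = (z : ZMod (k + 1))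
  · rw [if_pos hA, if_pos hA]
    push_cast [Nat.cast_sub (by omega : i ≤ k + 1)]
    ring
  · rw [if_neg hA, if_neg hA, if_neg ?_]
    · ring
    · rintro ⟨t, ht1, ht2, -⟩
      omega

end Aux

/-- In the extended affine symmetric group `Ŝ_{k+1}` (the quotient of the
`GL` model `AffG k` by the central translation subgroup, so that `π^{k+1} = id` and
`π s_i π⁻¹ = s_{i+1}`), the translation element `t_{−ϖ_i^∨}` associated to the negative of
the `i`-th fundamental coweight equals `π^{−i} x_{R_i}`, where `R_i = (i^{k+1−i})` is the
`k`-rectangle and `x_{R_i}` its affine Grassmannian element. -/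
theorem translation_eq_pi_xR (k : ℕ) (hk : 1 ≤ k) (i : ℕ) (hi1 : 1 ≤ i) (hik : i ≤ k) :
    (QuotientGroup.mk (tElem k (fun j => - omegaInd k i j)) : AffG k ⧸ Zc k)
      = (QuotientGroup.mk (piElem k) : AffG k ⧸ Zc k) ^ (-(i : ℤ))
        * QuotientGroup.mk (xPart k (List.replicate (k + 1 - i) i)) := by
  have key := key_eq hk i hi1 hik
  have h2 : (QuotientGroup.mk (piElem k ^ i) : AffG k ⧸ Zc k)
      = (QuotientGroup.mk (piElem k) : AffG k ⧸ Zc k) ^ i := by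
    rfl
  rw [← key, QuotientGroup.mk_mul, h2, zpow_neg, zpow_natCast, inv_mul_cancel_left]

end
end
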